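/- Let ρ > 0, C_f ≥ 0, let k, A₀ : ℝ → ℝ be continuously differentiable with k > 0 and A₀ > 0, and let A : ℝ → ℝ be continuously differentiable with A > 0 such that k(x)√A(x) − k(x)√A₀(x) is constant in x ('man at eternal rest' equilibrium). Then the time-independent pair (A(x), Q ≡ 0) is an exact solution of the variable-stiffness blood flow system: ∂ₜA + ∂ₓQ = 0 and ∂ₓ((k(x)/(3√π ρ))A^{3/2}) = (A/(√π ρ))(∂ₓ(k√A₀) − (2/3)√A ∂ₓk). -/

import Mathlib

open Real

/-- The "man at eternal rest" equilibrium: if `k√A − k√A₀` is constant, then the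
time-independent pair `(A, Q ≡ 0)` is an exact solution of the variable-stiffness
blood flow system. -/
theorem blood_flow_man_at_eternal_rest
    (ρ C_f : ℝ) (hρ : 0 < ρ) (hCf : 0 ≤ C_f)
    (k A₀ : ℝ → ℝ) (hk : ContDiff ℝ 1 k) (hA₀ : ContDiff ℝ 1 A₀)
    (hkpos : ∀ x, 0 < k x) (hA₀pos : ∀ x, 0 < A₀ x)
    (A : ℝ → ℝ) (hA : ContDiff ℝ 1 A) (hApos : ∀ x, 0 < A x)
    (heq : ∃ C : ℝ, ∀ x,
      k x * Real.sqrt (A x) - k x * Real.sqrt (A₀ x) = C) :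
    (∀ x t : ℝ, deriv (fun _ : ℝ => A x) t + deriv (fun _ : ℝ => (0 : ℝ)) x = 0) ∧
      ∀ x, deriv (fun y => k y / (3 * Real.sqrt π * ρ) * A y ^ (3 / 2 : ℝ)) x =
        A x / (Real.sqrt π * ρ) *
          (deriv (fun y => k y * Real.sqrt (A₀ y)) x
            - 2 / 3 * Real.sqrt (A x) * deriv k x) := by
  obtain ⟨C, hC⟩ := heq
  refine ⟨fun x t => by simp, fun x => ?_⟩
  have hAx := hApos x
  have hA₀x := hA₀pos x
  have hk' : HasDerivAt k (deriv k x) x :=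
    ((hk.differentiable one_ne_zero) x).hasDerivAt
  have hA' : HasDerivAt A (deriv A x) x :=
    ((hA.differentiable one_ne_zero) x).hasDerivAt
  have hA₀' : HasDerivAt A₀ (deriv A₀ x) x :=
    ((hA₀.differentiable one_ne_zero) x).hasDerivAt
  have hsA : HasDerivAt (fun y => Real.sqrt (A y))
      (deriv A x / (2 * Real.sqrt (A x))) x := hA'.sqrt hAx.ne'
  have hsA₀ : HasDerivAt (fun y => Real.sqrt (A₀ y))
      (deriv A₀ x / (2 * Real.sqrt (A₀ x))) x := hA₀'.sqrt hA₀x.ne'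
  -- derivative of the constant combination is zero
  have hD : HasDerivAt (fun y => k y * Real.sqrt (A y) - k y * Real.sqrt (A₀ y))
      ((deriv k x * Real.sqrt (A x) + k x * (deriv A x / (2 * Real.sqrt (A x)))) -
       (deriv k x * Real.sqrt (A₀ x) + k x * (deriv A₀ x / (2 * Real.sqrt (A₀ x))))) x :=
    (hk'.mul hsA).sub (hk'.mul hsA₀)
  have hconst : HasDerivAt (fun y => k y * Real.sqrt (A y) - k y * Real.sqrt (A₀ y))
      (0 : ℝ) x := by
    have h : (fun y => k y * Real.sqrt (A y) - k y * Real.sqrt (A₀ y)) = fun _ => C :=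
      funext hC
    rw [h]; exact hasDerivAt_const x C
  have hzero := hD.unique hconst
  -- derivative of the right-hand side inner function
  have hR : deriv (fun y => k y * Real.sqrt (A₀ y)) x =
      deriv k x * Real.sqrt (A₀ x) + k x * (deriv A₀ x / (2 * Real.sqrt (A₀ x))) :=
    (hk'.mul hsA₀).deriv
  -- derivative of the left-hand side
  have hrpow : HasDerivAt (fun y => A y ^ (3 / 2 : ℝ))
      (deriv A x * (3 / 2 : ℝ) * A x ^ ((3 / 2 : ℝ) - 1)) x :=
    hA'.rpow_const (Or.inl hAx.ne')
  have hL : deriv (fun y => k y / (3 * Real.sqrt π * ρ) * A y ^ (3 / 2 : ℝ)) x =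
      deriv k x / (3 * Real.sqrt π * ρ) * A x ^ (3 / 2 : ℝ) +
        k x / (3 * Real.sqrt π * ρ) * (deriv A x * (3 / 2 : ℝ) * A x ^ ((3 / 2 : ℝ) - 1)) :=
    ((hk'.div_const (3 * Real.sqrt π * ρ)).mul hrpow).deriv
  rw [hL, hR]
  have h1 : A x ^ ((3 / 2 : ℝ) - 1) = Real.sqrt (A x) := by
    rw [show (3 / 2 : ℝ) - 1 = (1 / 2 : ℝ) by norm_num, ← Real.sqrt_eq_rpow]
  have h2 : A x ^ (3 / 2 : ℝ) = A x * Real.sqrt (A x) := by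
    rw [show (3 / 2 : ℝ) = 1 + (1 / 2 : ℝ) by norm_num, Real.rpow_add hAx,
      Real.rpow_one, Real.sqrt_eq_rpow]
  rw [h1, h2]
  have hs : 0 < Real.sqrt (A x) := Real.sqrt_pos.mpr hAx
  have hs₀ : 0 < Real.sqrt (A₀ x) := Real.sqrt_pos.mpr hA₀x
  have hsπ : 0 < Real.sqrt π := Real.sqrt_pos.mpr Real.pi_pos
  have hs2 : Real.sqrt (A x) * Real.sqrt (A x) = A x := Real.mul_self_sqrt hAx.le
  field_simp at hzero ⊢
  linear_combination (3 * Real.sqrt (A x)) * hzero +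
    (-6 * deriv k x * Real.sqrt (A x) * Real.sqrt (A₀ x) +
        6 * deriv k x * Real.sqrt (A₀ x) ^ 2 + 3 * k x * deriv A₀ x) * hs2
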